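/- For every positive integer n, as integers, E₂(n) − E₃(n) equals 2·(−1)ⁿ if n is a perfect square and equals 0 otherwise, where E₂(n) (respectively E₃(n)) is the number of two-color partitions of n counted by E(n) whose total number of parts is even (respectively odd). -/

import Mathlib

open Polynomial Finset

noncomputable section JTPAux

/-- `∏_{k=a}^{b} (1 - X^{2k})` over `ℤ[X]`. -/
def P2 (a b : ℕ) : Polynomial ℤ := ∏ k ∈ Icc a b, (1 - X ^ (2 * k))

lemma P2_empty {a b : ℕ} (h : b < a) : P2 a b = 1 := by
  rw [P2, Finset.Icc_eq_empty (by omega), Finset.prod_empty]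

lemma P2_single (a : ℕ) : P2 a a = 1 - X ^ (2 * a) := by
  rw [P2, Finset.Icc_self, Finset.prod_singleton]

lemma P2_mul {a b c : ℕ} (h1 : a ≤ b + 1) (h2 : b ≤ c) : P2 a c = P2 a b * P2 (b + 1) c := by
  rw [P2, P2, P2, ← Finset.prod_union]
  · congr 1; ext k; simp only [Finset.mem_union, Finset.mem_Icc]; omega
  · rw [Finset.disjoint_left]; intro k hk hk'
    simp only [Finset.mem_Icc] at hk hk'; omega

lemma P2_top' {a b b' : ℕ} (h : a ≤ b) (hb : b = b' + 1) : P2 a b = P2 a b' * (1 - X ^ (2 * b)) := by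
  subst hb; rw [P2_mul h (Nat.le_succ b'), P2_single]

lemma P2_bot' {a b a' : ℕ} (h : a ≤ b) (ha : a' = a + 1) : P2 a b = (1 - X ^ (2 * a)) * P2 a' b := by
  subst ha; rw [P2_mul (Nat.le_succ a) h, P2_single]

/-- Finite-JTP auxiliary polynomial: `T_{N,j}(X²)`. -/
def TT (N : ℕ) (j : ℤ) : Polynomial ℤ :=
  if j.natAbs ≤ N then P2 (N + j.natAbs + 1) (2 * N) * P2 (N - j.natAbs + 1) N else 0

lemma TT_neg (N : ℕ) (j : ℤ) : TT N (-j) = TT N j := by simp [TT]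

lemma TT_vanish {N : ℕ} {j : ℤ} (h : N < j.natAbs) : TT N j = 0 := by
  rw [TT, if_neg (by omega)]

lemma TT_nat (N m : ℕ) (h : m ≤ N) {a b c : ℕ} (ha : a = N + m + 1) (hb : b = N - m + 1)
    (hc : c = 2 * N) : TT N (m : ℤ) = P2 a c * P2 b N := by
  rw [TT, Int.natAbs_natCast, if_pos h, ha, hb, hc]

lemma TT_rec_nat (N m : ℕ) :
    TT (N + 1) (m : ℤ) = (1 - X ^ (2 * N + 2)) *
      ((1 + X ^ (4 * N + 2)) * TT N (m : ℤ)
        + X ^ (2 * N + 2 - 2 * m) * TT N ((m : ℤ) - 1)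
        + X ^ (2 * N + 2 + 2 * m) * TT N ((m : ℤ) + 1)) := by
  rcases Nat.lt_or_ge (N + 1) m with hc6 | hc5
  · -- m ≥ N + 2 : everything vanishes
    rw [TT_vanish (j := (m : ℤ)) (by omega), TT_vanish (j := (m : ℤ)) (by omega),
      TT_vanish (j := (m : ℤ) - 1) (by omega), TT_vanish (j := (m : ℤ) + 1) (by omega)]
    ring
  rcases Nat.eq_or_lt_of_le hc5 with hc5' | hc4
  · -- m = N + 1
    subst hc5'
    have h1 : TT (N + 1) ((N + 1 : ℕ) : ℤ) = P2 1 (N + 1) := by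
      rw [TT_nat (N + 1) (N + 1) le_rfl (show 2*N+3 = N+1+(N+1)+1 by ring)
        (show 1 = N+1-(N+1)+1 by omega) (show 2*N+2 = 2*(N+1) by ring),
        P2_empty (show 2*N+2 < 2*N+3 by omega), one_mul]
    have h2 : TT N ((N + 1 : ℕ) : ℤ) = 0 := TT_vanish (by omega)
    have h4 : TT N (((N + 1 : ℕ) : ℤ) + 1) = 0 := TT_vanish (by omega)
    have h3 : TT N (((N + 1 : ℕ) : ℤ) - 1) = P2 1 N := by
      rw [show ((N + 1 : ℕ) : ℤ) - 1 = ((N : ℕ) : ℤ) by push_cast; ring,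
        TT_nat N N le_rfl (show 2*N+1 = N+N+1 by ring) (show 1 = N-N+1 by omega) rfl,
        P2_empty (show 2*N < 2*N+1 by omega), one_mul]
    rw [h1, h2, h3, h4, show 2*N+2-2*(N+1) = 0 by omega,
      P2_top' (a := 1) (b := N+1) (b' := N) (by omega) rfl]
    ring
  rcases Nat.lt_or_ge m 1 with hm0 | hm1
  · -- m = 0
    interval_cases m
    rcases Nat.lt_or_ge N 1 with hN | hN
    · interval_cases N
      have e0 : TT 0 (((0:ℕ):ℤ) - 1) = 0 := TT_vanish (by norm_num)
      have e1 : TT 0 (((0:ℕ):ℤ) + 1) = 0 := TT_vanish (by norm_num)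
      have e2 : TT 0 ((0:ℕ):ℤ) = 1 := by
        rw [TT_nat 0 0 le_rfl rfl rfl rfl, P2_empty (a := 0+0+1) (b := 2*0) (by norm_num)]
        norm_num
      have e3 : TT 1 ((0:ℕ):ℤ) = 1 - X ^ 4 := by
        rw [TT_nat 1 0 (by norm_num) (show 2 = 1+0+1 by norm_num) (show 2 = 1-0+1 by norm_num)
            (show 2 = 2*1 by norm_num), P2_empty (a := 2) (b := 1) (by norm_num), P2_single 2]
        norm_num
      rw [e0, e1, e2, e3]
      norm_num
      ring
    · -- m = 0, N ≥ 1
      obtain ⟨p, rfl⟩ : ∃ p, N = p + 1 := ⟨N - 1, by omega⟩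
      have h1 : TT (p+1+1) ((0:ℕ):ℤ) = P2 (p+3) (2*p+2) *
          ((1 - X ^ (2*(2*p+3))) * (1 - X ^ (2*(2*p+4)))) := by
        rw [TT_nat (p+2) 0 (by omega) (show p+3 = p+2+0+1 by ring) (show p+3 = p+2-0+1 by omega)
            (show 2*p+4 = 2*(p+2) by ring),
          P2_empty (show p+2 < p+3 by omega), mul_one,
          P2_top' (a := p+3) (b := 2*p+4) (b' := 2*p+3) (by omega) (by ring),
          P2_top' (a := p+3) (b := 2*p+3) (b' := 2*p+2) (by omega) (by ring)]
        ring
      have h2 : TT (p+1) ((0:ℕ):ℤ) = (1 - X ^ (2*(p+2))) * P2 (p+3) (2*p+2) := by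
        rw [TT_nat (p+1) 0 (by omega) (show p+2 = p+1+0+1 by ring) (show p+2 = p+1-0+1 by omega)
            (show 2*p+2 = 2*(p+1) by ring),
          P2_empty (show p+1 < p+2 by omega), mul_one,
          P2_bot' (a := p+2) (b := 2*p+2) (a' := p+3) (by omega) (by ring)]
      have h3 : TT (p+1) (((0:ℕ):ℤ) - 1) = P2 (p+3) (2*p+2) * (1 - X ^ (2*(p+1))) := by
        rw [show ((0:ℕ):ℤ) - 1 = -((1:ℕ):ℤ) by norm_num, TT_neg,
          TT_nat (p+1) 1 (by omega) (show p+3 = p+1+1+1 by ring) (show p+1 = p+1-1+1 by omega)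
            (show 2*p+2 = 2*(p+1) by ring), P2_single (p+1)]
      have h4 : TT (p+1) (((0:ℕ):ℤ) + 1) = P2 (p+3) (2*p+2) * (1 - X ^ (2*(p+1))) := by
        rw [show ((0:ℕ):ℤ) + 1 = ((1:ℕ):ℤ) by norm_num,
          TT_nat (p+1) 1 (by omega) (show p+3 = p+1+1+1 by ring) (show p+1 = p+1-1+1 by omega)
            (show 2*p+2 = 2*(p+1) by ring), P2_single (p+1)]
      rw [h1, h2, h3, h4, show 2*(p+1)+2-2*0 = 2*p+4 by omega]
      ring
  rcases Nat.eq_or_lt_of_le hc4 with hcN | hcb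
  · -- m = N, N ≥ 1
    obtain ⟨p, rfl⟩ : ∃ p, N = p + 1 := ⟨N - 1, by omega⟩
    have hm : m = p + 1 := by omega
    subst hm
    have h1 : TT (p+1+1) ((p+1 : ℕ) : ℤ) =
        ((1 - X ^ (2*(2*p+4))) * (P2 2 (p+1) * (1 - X ^ (2*(p+2))))) := by
      rw [TT_nat (p+2) (p+1) (by omega) (show 2*p+4 = p+2+(p+1)+1 by ring)
          (show 2 = p+2-(p+1)+1 by omega) (show 2*p+4 = 2*(p+2) by ring),
        P2_single (2*p+4),
        P2_top' (a := 2) (b := p+2) (b' := p+1) (by omega) (by ring)]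
    have h2 : TT (p+1) ((p+1 : ℕ) : ℤ) = (1 - X ^ 2) * P2 2 (p+1) := by
      rw [TT_nat (p+1) (p+1) le_rfl (show 2*p+3 = p+1+(p+1)+1 by ring)
          (show 1 = p+1-(p+1)+1 by omega) (show 2*p+2 = 2*(p+1) by ring),
        P2_empty (show 2*p+2 < 2*p+3 by omega), one_mul,
        P2_bot' (a := 1) (b := p+1) (a' := 2) (by omega) (by ring)]
    have h3 : TT (p+1) (((p+1 : ℕ) : ℤ) - 1) = (1 - X ^ (2*(2*p+2))) * P2 2 (p+1) := by
      rw [show ((p+1 : ℕ) : ℤ) - 1 = ((p : ℕ) : ℤ) by push_cast; ring,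
        TT_nat (p+1) p (by omega) (show 2*p+2 = p+1+p+1 by ring)
          (show 2 = p+1-p+1 by omega) (show 2*p+2 = 2*(p+1) by ring),
        P2_single (2*p+2)]
    have h4 : TT (p+1) (((p+1 : ℕ) : ℤ) + 1) = 0 := TT_vanish (by omega)
    rw [h1, h2, h3, h4, show 2*(p+1)+2-2*(p+1) = 2 by omega]
    ring
  · -- 1 ≤ m, m + 1 ≤ N
    obtain ⟨d, rfl⟩ : ∃ d, N = m + d + 1 := ⟨N - m - 1, by omega⟩
    have h1 : TT (m+d+1+1) ((m : ℕ) : ℤ) =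
        (P2 (2*m+d+3) (2*m+2*d+2) * ((1 - X ^ (2*(2*m+2*d+3))) * (1 - X ^ (2*(2*m+2*d+4))))) *
          (P2 (d+3) (m+d+1) * (1 - X ^ (2*(m+d+2)))) := by
      rw [TT_nat (m+d+2) m (by omega) (show 2*m+d+3 = m+d+2+m+1 by ring)
          (show d+3 = m+d+2-m+1 by omega) (show 2*m+2*d+4 = 2*(m+d+2) by ring),
        P2_top' (a := 2*m+d+3) (b := 2*m+2*d+4) (b' := 2*m+2*d+3) (by omega) (by ring),
        P2_top' (a := 2*m+d+3) (b := 2*m+2*d+3) (b' := 2*m+2*d+2) (by omega) (by ring),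
        P2_top' (a := d+3) (b := m+d+2) (b' := m+d+1) (by omega) (by ring)]
      ring
    have h2 : TT (m+d+1) ((m : ℕ) : ℤ) =
        ((1 - X ^ (2*(2*m+d+2))) * P2 (2*m+d+3) (2*m+2*d+2)) *
          ((1 - X ^ (2*(d+2))) * P2 (d+3) (m+d+1)) := by
      rw [TT_nat (m+d+1) m (by omega) (show 2*m+d+2 = m+d+1+m+1 by ring)
          (show d+2 = m+d+1-m+1 by omega) (show 2*m+2*d+2 = 2*(m+d+1) by ring),
        P2_bot' (a := 2*m+d+2) (b := 2*m+2*d+2) (a' := 2*m+d+3) (by omega) (by ring),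
        P2_bot' (a := d+2) (b := m+d+1) (a' := d+3) (by omega) (by ring)]
    have h3 : TT (m+d+1) (((m : ℕ) : ℤ) - 1) =
        (((1 - X ^ (2*(2*m+d+1))) * ((1 - X ^ (2*(2*m+d+2))) * P2 (2*m+d+3) (2*m+2*d+2)))) *
          P2 (d+3) (m+d+1) := by
      rw [show ((m : ℕ) : ℤ) - 1 = ((m - 1 : ℕ) : ℤ) by omega,
        TT_nat (m+d+1) (m-1) (by omega) (show 2*m+d+1 = m+d+1+(m-1)+1 by omega)
          (show d+3 = m+d+1-(m-1)+1 by omega) (show 2*m+2*d+2 = 2*(m+d+1) by ring),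
        P2_bot' (a := 2*m+d+1) (b := 2*m+2*d+2) (a' := 2*m+d+2) (by omega) (by ring),
        P2_bot' (a := 2*m+d+2) (b := 2*m+2*d+2) (a' := 2*m+d+3) (by omega) (by ring)]
    have h4 : TT (m+d+1) (((m : ℕ) : ℤ) + 1) =
        P2 (2*m+d+3) (2*m+2*d+2) *
          ((1 - X ^ (2*(d+1))) * ((1 - X ^ (2*(d+2))) * P2 (d+3) (m+d+1))) := by
      rw [show ((m : ℕ) : ℤ) + 1 = ((m + 1 : ℕ) : ℤ) by push_cast; ring,
        TT_nat (m+d+1) (m+1) (by omega) (show 2*m+d+3 = m+d+1+(m+1)+1 by ring)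
          (show d+1 = m+d+1-(m+1)+1 by omega) (show 2*m+2*d+2 = 2*(m+d+1) by ring),
        P2_bot' (a := d+1) (b := m+d+1) (a' := d+2) (by omega) (by ring),
        P2_bot' (a := d+2) (b := m+d+1) (a' := d+3) (by omega) (by ring)]
    rw [h1, h2, h3, h4, show 2*(m+d+1)+2-2*m = 2*d+4 by omega]
    ring

/-- The recurrence for `TT`, for all integer `j`. -/
lemma TT_rec (N : ℕ) (j : ℤ) :
    TT (N + 1) j = (1 - X ^ (2 * N + 2)) *
      ((1 + X ^ (4 * N + 2)) * TT N j
        + X ^ (2 * N + 2 - 2 * j).toNat * TT N (j - 1)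
        + X ^ (2 * N + 2 + 2 * j).toNat * TT N (j + 1)) := by
  rcases Int.natAbs_eq j with hj | hj
  · rw [hj]
    have e1 : ((2:ℤ) * N + 2 - 2 * (j.natAbs : ℤ)).toNat = 2 * N + 2 - 2 * j.natAbs := by omega
    have e2 : ((2:ℤ) * N + 2 + 2 * (j.natAbs : ℤ)).toNat = 2 * N + 2 + 2 * j.natAbs := by omega
    rw [e1, e2]
    exact TT_rec_nat N j.natAbs
  · rw [hj]
    have e1 : ((2:ℤ) * N + 2 - 2 * (-(j.natAbs : ℤ))).toNat = 2 * N + 2 + 2 * j.natAbs := by omega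
    have e2 : ((2:ℤ) * N + 2 + 2 * (-(j.natAbs : ℤ))).toNat = 2 * N + 2 - 2 * j.natAbs := by omega
    rw [e1, e2, TT_neg (N+1) (j.natAbs : ℤ), TT_neg N (j.natAbs : ℤ),
      show -(j.natAbs : ℤ) - 1 = -((j.natAbs : ℤ) + 1) by ring, TT_neg N ((j.natAbs : ℤ) + 1),
      show -(j.natAbs : ℤ) + 1 = -((j.natAbs : ℤ) - 1) by ring, TT_neg N ((j.natAbs : ℤ) - 1)]
    rw [TT_rec_nat N j.natAbs]
    ring

end JTPAux

/-- Generating polynomial of pairs of subsets of odd numbers `≤ 2N-1` with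
`|A| - |B| = j`, weighted `X^{ΣA+ΣB}` (defined by its recurrence). -/
noncomputable def g : ℕ → ℤ → Polynomial ℤ :=
  Nat.rec (fun j => if j = 0 then 1 else 0)
    (fun N gN j => (1 + X ^ (4*N+2)) * gN j + X ^ (2*N+1) * (gN (j-1) + gN (j+1)))

lemma g_zero (j : ℤ) : g 0 j = if j = 0 then 1 else 0 := rfl

lemma g_succ (N : ℕ) (j : ℤ) :
    g (N+1) j = (1 + X ^ (4*N+2)) * g N j + X ^ (2*N+1) * (g N (j-1) + g N (j+1)) := rfl

lemma g_vanish : ∀ (N : ℕ) (j : ℤ), N < j.natAbs → g N j = 0 := by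
  intro N
  induction N with
  | zero => intro j hj; rw [g_zero, if_neg (by omega)]
  | succ N ih =>
      intro j hj
      rw [g_succ, ih j (by omega), ih (j-1) (by omega), ih (j+1) (by omega)]
      ring

lemma natAbs_sq_cast (j : ℤ) : ((j.natAbs ^ 2 : ℕ) : ℤ) = j ^ 2 := by
  push_cast [Int.natAbs_sq]
  rw [sq_abs]

/-- Key lemma: `g N j · ∏_{k=1}^{N} (1-X^{2k}) = X^{j²} · TT N j`. -/
lemma g_mul_P2 (N : ℕ) : ∀ j : ℤ, g N j * P2 1 N = X ^ (j.natAbs ^ 2) * TT N j := by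
  induction N with
  | zero =>
      intro j
      rw [g_zero, P2_empty (by omega), mul_one, TT]
      by_cases hj : j = 0
      · subst hj
        norm_num
        rw [P2_empty (by norm_num)]
        norm_num
      · rw [if_neg hj, if_neg (by simpa using hj)]
        ring
  | succ N ih =>
      intro j
      have hP : P2 1 (N+1) = P2 1 N * (1 - X ^ (2*N+2)) := by
        rw [P2_top' (a := 1) (b := N+1) (b' := N) (by omega) rfl,
          show 2*(N+1) = 2*N+2 by ring]
      have key1 : X ^ (2*N+1) * (X ^ ((j-1).natAbs ^ 2) * TT N (j-1))
          = X ^ (j.natAbs ^ 2) * (X ^ ((2*(N:ℤ)+2-2*j).toNat) * TT N (j-1)) := by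
        by_cases hj : j ≤ (N:ℤ) + 1
        · rw [← mul_assoc, ← mul_assoc, ← pow_add, ← pow_add]
          congr 2
          have h1 := natAbs_sq_cast (j-1)
          have h2 := natAbs_sq_cast j
          have e : ((2*(N:ℤ)+2-2*j).toNat : ℤ) = 2*(N:ℤ)+2-2*j := by omega
          have : ((2*N+1 + (j-1).natAbs ^ 2 : ℕ) : ℤ)
              = ((j.natAbs ^ 2 + (2*(N:ℤ)+2-2*j).toNat : ℕ) : ℤ) := by
            push_cast [h1, h2, e]
            ring
          exact_mod_cast this
        · rw [TT_vanish (j := j - 1) (by omega)]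
          ring
      have key2 : X ^ (2*N+1) * (X ^ ((j+1).natAbs ^ 2) * TT N (j+1))
          = X ^ (j.natAbs ^ 2) * (X ^ ((2*(N:ℤ)+2+2*j).toNat) * TT N (j+1)) := by
        by_cases hj : -((N:ℤ) + 1) ≤ j
        · rw [← mul_assoc, ← mul_assoc, ← pow_add, ← pow_add]
          congr 2
          have h1 := natAbs_sq_cast (j+1)
          have h2 := natAbs_sq_cast j
          have e : ((2*(N:ℤ)+2+2*j).toNat : ℤ) = 2*(N:ℤ)+2+2*j := by omega
          have : ((2*N+1 + (j+1).natAbs ^ 2 : ℕ) : ℤ)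
              = ((j.natAbs ^ 2 + (2*(N:ℤ)+2+2*j).toNat : ℕ) : ℤ) := by
            push_cast [h1, h2, e]
            ring
          exact_mod_cast this
        · rw [TT_vanish (j := j + 1) (by omega)]
          ring
      rw [g_succ, hP, TT_rec N j]
      calc ((1 + X ^ (4*N+2)) * g N j + X ^ (2*N+1) * (g N (j-1) + g N (j+1)))
            * (P2 1 N * (1 - X ^ (2*N+2)))
          = ((1 + X ^ (4*N+2)) * (g N j * P2 1 N)
              + X ^ (2*N+1) * (g N (j-1) * P2 1 N)
              + X ^ (2*N+1) * (g N (j+1) * P2 1 N)) * (1 - X ^ (2*N+2)) := by ring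
        _ = ((1 + X ^ (4*N+2)) * (X ^ (j.natAbs ^ 2) * TT N j)
              + X ^ (j.natAbs ^ 2) * (X ^ ((2*(N:ℤ)+2-2*j).toNat) * TT N (j-1))
              + X ^ (j.natAbs ^ 2) * (X ^ ((2*(N:ℤ)+2+2*j).toNat) * TT N (j+1)))
            * (1 - X ^ (2*N+2)) := by rw [ih j, ih (j-1), ih (j+1), key1, key2]
        _ = X ^ (j.natAbs ^ 2) * ((1 - X ^ (2*N+2))
            * ((1 + X ^ (4*N+2)) * TT N j
              + X ^ ((2*(N:ℤ)+2-2*j).toNat) * TT N (j-1)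
              + X ^ ((2*(N:ℤ)+2+2*j).toNat) * TT N (j+1))) := by ring

/-- Sign `(-1)^{|j|}`. -/
def sg (j : ℤ) : ℤ := (-1) ^ j.natAbs

lemma sg_zero : sg 0 = 1 := rfl

lemma sg_succ (j : ℤ) : sg (j + 1) = - sg j := by
  unfold sg
  rcases Int.even_or_odd j with hj | hj
  · have h1 : (-1:ℤ) ^ j.natAbs = 1 := (Int.natAbs_even.mpr hj).neg_one_pow
    have h2 : (-1:ℤ) ^ (j+1).natAbs = -1 := (Int.natAbs_odd.mpr hj.add_one).neg_one_pow
    rw [h1, h2]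
  · have h1 : (-1:ℤ) ^ j.natAbs = -1 := (Int.natAbs_odd.mpr hj).neg_one_pow
    have h2 : (-1:ℤ) ^ (j+1).natAbs = 1 := (Int.natAbs_even.mpr hj.add_one).neg_one_pow
    rw [h1, h2]
    norm_num

lemma sg_pred (j : ℤ) : sg (j - 1) = - sg j := by
  have := sg_succ (j - 1)
  rw [sub_add_cancel] at this
  rw [this]; ring

lemma shift_sum (a b : ℤ) (F : ℤ → Polynomial ℤ) :
    ∑ j ∈ Icc a b, F (j - 1) = ∑ j ∈ Icc (a-1) (b-1), F j := by
  have : Icc (a-1) (b-1) = (Icc a b).map ⟨fun x => x - 1, sub_left_injective⟩ := by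
    ext x
    simp only [Finset.mem_map, Finset.mem_Icc, Function.Embedding.coeFn_mk]
    constructor
    · intro hx; exact ⟨x + 1, by omega, by ring⟩
    · rintro ⟨y, hy, rfl⟩; omega
  rw [this, Finset.sum_map]
  simp only [Function.Embedding.coeFn_mk]

lemma shift_sum' (a b : ℤ) (F : ℤ → Polynomial ℤ) :
    ∑ j ∈ Icc a b, F (j + 1) = ∑ j ∈ Icc (a+1) (b+1), F j := by
  have : Icc (a+1) (b+1) = (Icc a b).map ⟨fun x => x + 1, add_left_injective 1⟩ := by
    ext x
    simp only [Finset.mem_map, Finset.mem_Icc, Function.Embedding.coeFn_mk]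
    constructor
    · intro hx; exact ⟨x - 1, by omega, by ring⟩
    · rintro ⟨y, hy, rfl⟩; omega
  rw [this, Finset.sum_map]
  simp only [Function.Embedding.coeFn_mk]

/-- Shrink a sum over a large interval to `Icc (-N) N` when terms vanish outside. -/
lemma shrink_sum {N M : ℕ} (hNM : N ≤ M) (F : ℤ → Polynomial ℤ)
    (hF : ∀ j : ℤ, N < j.natAbs → F j = 0) :
    ∑ j ∈ Icc (-(M:ℤ)) M, F j = ∑ j ∈ Icc (-(N:ℤ)) N, F j := by
  refine (Finset.sum_subset ?_ ?_).symm
  · intro x hx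
    simp only [Finset.mem_Icc] at hx ⊢
    omega
  · intro x hx hx'
    simp only [Finset.mem_Icc] at hx hx'
    exact hF x (by omega)

/-- The signed sum of the `g N j` gives `∏ (1-X^{2k-1})²`. -/
lemma sum_g (N : ℕ) :
    ∑ j ∈ Icc (-(N:ℤ)) N, C (sg j) * g N j = ∏ k ∈ Icc 1 N, (1 - X ^ (2*k-1)) ^ 2 := by
  induction N with
  | zero => simp [g_zero, sg_zero]
  | succ N ih =>
      have hvan : ∀ j : ℤ, N < j.natAbs → C (sg j) * g N j = 0 := by
        intro j hj
        rw [g_vanish N j (by omega), mul_zero]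
      have split : ∑ j ∈ Icc (-((N:ℤ)+1)) ((N:ℤ)+1), C (sg j) * g (N+1) j
          = (1 + X ^ (4*N+2)) * (∑ j ∈ Icc (-((N:ℤ)+1)) ((N:ℤ)+1), C (sg j) * g N j)
            + (∑ j ∈ Icc (-((N:ℤ)+1)) ((N:ℤ)+1), C (sg j) * (X ^ (2*N+1) * g N (j-1)))
            + (∑ j ∈ Icc (-((N:ℤ)+1)) ((N:ℤ)+1), C (sg j) * (X ^ (2*N+1) * g N (j+1))) := by
        rw [Finset.mul_sum, ← Finset.sum_add_distrib, ← Finset.sum_add_distrib]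
        apply Finset.sum_congr rfl
        intro j _
        rw [g_succ]
        ring
      have hA : ∑ j ∈ Icc (-((N:ℤ)+1)) ((N:ℤ)+1), C (sg j) * g N j
          = ∑ j ∈ Icc (-(N:ℤ)) N, C (sg j) * g N j := by
        have := shrink_sum (M := N+1) (N := N) (by omega) (fun j => C (sg j) * g N j) hvan
        simpa using this
      have hB : ∑ j ∈ Icc (-((N:ℤ)+1)) ((N:ℤ)+1), C (sg j) * (X ^ (2*N+1) * g N (j-1))
          = - X ^ (2*N+1) * ∑ j ∈ Icc (-(N:ℤ)) N, C (sg j) * g N j := by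
        have e1 : ∀ j : ℤ, C (sg j) * (X ^ (2*N+1) * g N (j-1))
            = (fun j' => C (sg (j'+1)) * (X ^ (2*N+1) * g N j')) (j - 1) := by
          intro j
          simp only [sub_add_cancel]
        rw [Finset.sum_congr rfl (fun j _ => e1 j),
          shift_sum (-((N:ℤ)+1)) ((N:ℤ)+1) (fun j' => C (sg (j'+1)) * (X ^ (2*N+1) * g N j'))]
        have e2 : ∑ j ∈ Icc (-((N:ℤ)+1)-1) (((N:ℤ)+1)-1), C (sg (j+1)) * (X ^ (2*N+1) * g N j)
            = ∑ j ∈ Icc (-(N:ℤ)) N, C (sg (j+1)) * (X ^ (2*N+1) * g N j) := by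
          have : ∀ j : ℤ, N < j.natAbs → C (sg (j+1)) * (X ^ (2*N+1) * g N j) = 0 := by
            intro j hj
            rw [g_vanish N j (by omega)]
            ring
          have h2 := shrink_sum (M := N+2) (N := N) (by omega)
            (fun j => C (sg (j+1)) * (X ^ (2*N+1) * g N j)) this
          rw [show -((N:ℤ)+1)-1 = -((N+2:ℕ):ℤ) by push_cast; ring,
            show ((N:ℤ)+1)-1 = (N:ℤ) by ring]
          rw [← h2]
          apply Finset.sum_subset
          · intro x hx; simp only [Finset.mem_Icc] at hx ⊢; omega
          · intro x hx hx'
            simp only [Finset.mem_Icc] at hx hx'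
            exact this x (by omega)
        rw [e2, Finset.mul_sum]
        apply Finset.sum_congr rfl
        intro j _
        rw [sg_succ, map_neg]
        ring
      have hC : ∑ j ∈ Icc (-((N:ℤ)+1)) ((N:ℤ)+1), C (sg j) * (X ^ (2*N+1) * g N (j+1))
          = - X ^ (2*N+1) * ∑ j ∈ Icc (-(N:ℤ)) N, C (sg j) * g N j := by
        have e1 : ∀ j : ℤ, C (sg j) * (X ^ (2*N+1) * g N (j+1))
            = (fun j' => C (sg (j'-1)) * (X ^ (2*N+1) * g N j')) (j + 1) := by
          intro j
          simp only [add_sub_cancel_right]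
        rw [Finset.sum_congr rfl (fun j _ => e1 j),
          shift_sum' (-((N:ℤ)+1)) ((N:ℤ)+1) (fun j' => C (sg (j'-1)) * (X ^ (2*N+1) * g N j'))]
        have e2 : ∑ j ∈ Icc (-((N:ℤ)+1)+1) (((N:ℤ)+1)+1), C (sg (j-1)) * (X ^ (2*N+1) * g N j)
            = ∑ j ∈ Icc (-(N:ℤ)) N, C (sg (j-1)) * (X ^ (2*N+1) * g N j) := by
          have : ∀ j : ℤ, N < j.natAbs → C (sg (j-1)) * (X ^ (2*N+1) * g N j) = 0 := by
            intro j hj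
            rw [g_vanish N j (by omega)]
            ring
          have h2 := shrink_sum (M := N+2) (N := N) (by omega)
            (fun j => C (sg (j-1)) * (X ^ (2*N+1) * g N j)) this
          rw [← h2]
          apply Finset.sum_subset
          · intro x hx; simp only [Finset.mem_Icc] at hx ⊢; omega
          · intro x hx hx'
            simp only [Finset.mem_Icc] at hx hx'
            exact this x (by omega)
        rw [e2, Finset.mul_sum]
        apply Finset.sum_congr rfl
        intro j _
        rw [sg_pred, map_neg]
        ring
      have hIcc : Icc (-((N+1:ℕ):ℤ)) ((N+1:ℕ):ℤ) = Icc (-((N:ℤ)+1)) ((N:ℤ)+1) := by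
        norm_num
      rw [hIcc, split, hA, hB, hC, ih,
        Finset.prod_Icc_succ_top (show 1 ≤ N+1 by omega),
        show 2*(N+1)-1 = 2*N+1 by omega]
      ring

/-- Main polynomial identity (finite Jacobi triple product, specialized). -/
lemma main_identity (N : ℕ) :
    (∏ k ∈ Icc 1 N, (1 - X ^ (2*k-1) : Polynomial ℤ) ^ 2) * P2 1 N
      = ∑ j ∈ Icc (-(N:ℤ)) N, C (sg j) * (X ^ (j.natAbs ^ 2) * TT N j) := by
  rw [← sum_g, Finset.sum_mul]
  apply Finset.sum_congr rfl
  intro j _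
  rw [mul_assoc, g_mul_P2]

/-- Splitting a product over `[1, 2N]` into odd and even indices. -/
lemma odd_even_split (N : ℕ) (f : ℕ → Polynomial ℤ) :
    ∏ k ∈ Icc 1 (2*N), f k = (∏ k ∈ Icc 1 N, f (2*k-1)) * ∏ k ∈ Icc 1 N, f (2*k) := by
  induction N with
  | zero => simp
  | succ N ih =>
      rw [show 2*(N+1) = (2*N+1)+1 by ring, Finset.prod_Icc_succ_top (show 1 ≤ 2*N+1+1 by omega),
        Finset.prod_Icc_succ_top (show 1 ≤ 2*N+1 by omega), ih,
        Finset.prod_Icc_succ_top (show 1 ≤ N+1 by omega),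
        Finset.prod_Icc_succ_top (show 1 ≤ N+1 by omega),
        show 2*(N+1)-1 = 2*N+1 by omega, show 2*(N+1) = 2*N+1+1 by ring]
      ring

/-- Expansion of `∏ (1 - X^k)` as a signed sum over subsets. -/
lemma prod_one_sub_X (s : Finset ℕ) :
    ∏ k ∈ s, (1 - X ^ k : Polynomial ℤ)
      = ∑ A ∈ s.powerset, C ((-1) ^ A.card) * X ^ (∑ i ∈ A, i) := by
  have : ∀ k, (1 - X ^ k : Polynomial ℤ) = -X ^ k + 1 := fun k => by ring
  rw [Finset.prod_congr rfl (fun k _ => this k), Finset.prod_add]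
  apply Finset.sum_congr rfl
  intro A hA
  rw [Finset.prod_const_one, mul_one]
  have : ∀ k ∈ A, (-X ^ k : Polynomial ℤ) = (-1) * X ^ k := fun k _ => by ring
  rw [Finset.prod_congr rfl this, Finset.prod_mul_distrib, Finset.prod_const,
    Finset.prod_pow_eq_pow_sum]
  simp [map_pow]

/-- Products of `(1-X^{2k})` with all `2k ≥ d` are `1 + X^d·R`. -/
lemma prod_high (s : Finset ℕ) (d : ℕ) (h : ∀ k ∈ s, d ≤ 2*k) :
    ∃ R, ∏ k ∈ s, (1 - X ^ (2*k) : Polynomial ℤ) = 1 + X ^ d * R := by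
  classical
  induction s using Finset.induction_on with
  | empty => exact ⟨0, by simp⟩
  | insert _ _ ha ih =>
      rename_i a s'
      obtain ⟨R, hR⟩ := ih (fun k hk => h k (Finset.mem_insert_of_mem hk))
      refine ⟨R - X ^ (2*a-d) - X ^ d * X ^ (2*a-d) * R, ?_⟩
      rw [Finset.prod_insert ha, hR]
      have hd : d ≤ 2*a := h a (Finset.mem_insert_self a s')
      have hsplit : (X : Polynomial ℤ) ^ (2*a) = X ^ d * X ^ (2*a-d) := by
        rw [← pow_add]
        congr 1
        omega
      rw [hsplit]
      ring

lemma TT_one_add {N : ℕ} {j : ℤ} (hj : j.natAbs ≤ N) :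
    ∃ R, TT N j = 1 + X ^ (2*(N - j.natAbs)+2) * R := by
  rw [TT, if_pos hj, P2, P2]
  obtain ⟨R1, h1⟩ := prod_high (Icc (N + j.natAbs + 1) (2*N)) (2*(N - j.natAbs)+2)
    (fun k hk => by simp only [Finset.mem_Icc] at hk; omega)
  obtain ⟨R2, h2⟩ := prod_high (Icc (N - j.natAbs + 1) N) (2*(N - j.natAbs)+2)
    (fun k hk => by simp only [Finset.mem_Icc] at hk; omega)
  refine ⟨R1 + R2 + X ^ (2*(N - j.natAbs)+2) * (R1 * R2), ?_⟩
  rw [h1, h2]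
  ring

/-- Coefficient of `Xⁿ` in the right-hand side. -/
lemma rhs_coeff (n : ℕ) (hn : 0 < n) :
    (∑ j ∈ Icc (-(n:ℤ)) n, C (sg j) * (X ^ (j.natAbs ^ 2) * TT n j)).coeff n
      = if IsSquare n then 2 * (-1) ^ n else 0 := by
  rw [Polynomial.finset_sum_coeff]
  have hterm : ∀ j ∈ Icc (-(n:ℤ)) n,
      (C (sg j) * (X ^ (j.natAbs ^ 2) * TT n j)).coeff n
        = if j.natAbs ^ 2 = n then sg j else 0 := by
    intro j hj
    simp only [Finset.mem_Icc] at hj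
    have hjn : j.natAbs ≤ n := by omega
    rw [Polynomial.coeff_C_mul]
    by_cases hsq : j.natAbs ^ 2 ≤ n
    · obtain ⟨R, hR⟩ := TT_one_add hjn
      rw [hR, mul_comm (X ^ (j.natAbs ^ 2)) (1 + X ^ (2*(n - j.natAbs)+2) * R),
        Polynomial.coeff_mul_X_pow', if_pos hsq]
      have hlt : n - j.natAbs ^ 2 < 2*(n - j.natAbs)+2 := by
        have : j.natAbs ≤ j.natAbs ^ 2 := by nlinarith
        omega
      have hone : ((1 : Polynomial ℤ) + X ^ (2*(n - j.natAbs)+2) * R).coeff (n - j.natAbs ^ 2)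
          = if n - j.natAbs ^ 2 = 0 then 1 else 0 := by
        rw [Polynomial.coeff_add, Polynomial.coeff_one,
          mul_comm (X ^ (2*(n - j.natAbs)+2)) R, Polynomial.coeff_mul_X_pow',
          if_neg (show ¬(2*(n - j.natAbs)+2 ≤ n - j.natAbs ^ 2) by omega), add_zero]
      rw [hone]
      by_cases he : j.natAbs ^ 2 = n
      · rw [if_pos (by omega), if_pos he]
        ring
      · rw [if_neg (by omega), if_neg he]
        ring
    · rw [mul_comm (X ^ (j.natAbs ^ 2)) (TT n j), Polynomial.coeff_mul_X_pow',
        if_neg (by omega), if_neg (by omega)]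
      ring
  rw [Finset.sum_congr rfl hterm]
  by_cases hsq : IsSquare n
  · obtain ⟨r, hr⟩ := hsq
    have hr1 : 1 ≤ r := by nlinarith
    have hrn : r ≤ n := by nlinarith
    rw [← Finset.sum_filter]
    have hfil : (Icc (-(n:ℤ)) n).filter (fun j => j.natAbs ^ 2 = n) = {(r:ℤ), -(r:ℤ)} := by
      ext j
      simp only [Finset.mem_filter, Finset.mem_Icc, Finset.mem_insert, Finset.mem_singleton]
      constructor
      · rintro ⟨⟨h1, h2⟩, h3⟩
        have h4 : j.natAbs * j.natAbs = r * r := by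
          have := h3
          rw [pow_two] at this
          omega
        have : j.natAbs = r := Nat.mul_self_inj.mp h4
        omega
      · rintro (rfl | rfl) <;> refine ⟨⟨by omega, by omega⟩, ?_⟩ <;> simp <;> nlinarith
    rw [hfil, Finset.sum_pair (by omega : (r:ℤ) ≠ -(r:ℤ)), if_pos ⟨r, hr⟩]
    have e1 : sg (r:ℤ) = (-1) ^ r := by simp [sg]
    have e2 : sg (-(r:ℤ)) = (-1) ^ r := by simp [sg]
    rw [e1, e2, hr]
    rcases Nat.even_or_odd r with hre | hro
    · rw [hre.neg_one_pow, (hre.mul_right r).neg_one_pow]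
      norm_num
    · rw [hro.neg_one_pow, (hro.mul hro).neg_one_pow]
      norm_num
  · rw [if_neg hsq]
    apply Finset.sum_eq_zero
    intro j _
    rw [if_neg (fun he => hsq ⟨j.natAbs, by rw [← he]; ring⟩)]

lemma lhs_coeff (n : ℕ) (s t : Finset ℕ) :
    ((∏ m ∈ s, (1 - X ^ m : Polynomial ℤ)) * (∏ k ∈ t, (1 - X ^ k))).coeff n
      = ∑ p ∈ (s.powerset ×ˢ t.powerset).filter
          (fun p => (∑ x ∈ p.1, x) + (∑ x ∈ p.2, x) = n), (-1:ℤ) ^ (p.1.card + p.2.card) := by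
  classical
  rw [prod_one_sub_X, prod_one_sub_X, Finset.sum_mul_sum, Finset.sum_filter,
    Finset.sum_product]
  rw [Polynomial.finset_sum_coeff]
  apply Finset.sum_congr rfl
  intro A _
  rw [Polynomial.finset_sum_coeff]
  apply Finset.sum_congr rfl
  intro B _
  have e : C ((-1:ℤ) ^ A.card) * X ^ (∑ i ∈ A, i) * (C ((-1:ℤ) ^ B.card) * X ^ (∑ i ∈ B, i))
      = C ((-1:ℤ) ^ (A.card + B.card)) * X ^ ((∑ i ∈ A, i) + (∑ i ∈ B, i)) := by
    rw [pow_add, pow_add, map_mul]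
    ring
  rw [e, Polynomial.coeff_C_mul, Polynomial.coeff_X_pow]
  by_cases h : (∑ i ∈ A, i) + (∑ i ∈ B, i) = n
  · rw [if_pos h, if_pos h.symm, mul_one]
  · rw [if_neg h, if_neg (fun hh => h hh.symm), mul_zero]


/-- For `n ≥ 1`, as integers, `E₂(n) − E₃(n)` equals `2·(−1)ⁿ` if `n`
is a perfect square and `0` otherwise. Here `E₂(n)` (resp. `E₃(n)`) counts
two-color partitions `(g, b)` of `n` (with `g` a finite set of distinct odd
positive integers and `b` a finite set of distinct positive integers) whose total
number of parts `|g| + |b|` is even (resp. odd). -/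
theorem two_color_total_parts_parity_difference (n : ℕ) (hn : 0 < n) :
    (Nat.card {p : Finset ℕ × Finset ℕ //
      ((∀ x ∈ p.1, Odd x ∧ 0 < x) ∧ (∀ x ∈ p.2, 0 < x) ∧
        (∑ x ∈ p.1, x) + (∑ x ∈ p.2, x) = n) ∧
      Even (p.1.card + p.2.card)} : ℤ) -
    (Nat.card {p : Finset ℕ × Finset ℕ //
      ((∀ x ∈ p.1, Odd x ∧ 0 < x) ∧ (∀ x ∈ p.2, 0 < x) ∧
        (∑ x ∈ p.1, x) + (∑ x ∈ p.2, x) = n) ∧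
      Odd (p.1.card + p.2.card)} : ℤ) =
    (if IsSquare n then 2 * (-1) ^ n else 0) := by
  classical
  set Od : Finset ℕ := (Icc 1 n).image (fun k => 2*k-1) with hOd
  set Fn : Finset (Finset ℕ × Finset ℕ) :=
    (Od.powerset ×ˢ (Icc 1 (2*n)).powerset).filter
      (fun p => (∑ x ∈ p.1, x) + (∑ x ∈ p.2, x) = n) with hFn
  -- membership characterization
  have hmem : ∀ p : Finset ℕ × Finset ℕ, p ∈ Fn ↔
      ((∀ x ∈ p.1, Odd x ∧ 0 < x) ∧ (∀ x ∈ p.2, 0 < x) ∧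
        (∑ x ∈ p.1, x) + (∑ x ∈ p.2, x) = n) := by
    intro p
    rw [hFn, Finset.mem_filter, Finset.mem_product, Finset.mem_powerset, Finset.mem_powerset]
    constructor
    · rintro ⟨⟨h1, h2⟩, h3⟩
      refine ⟨?_, ?_, h3⟩
      · intro x hx
        obtain ⟨k, hk, rfl⟩ := Finset.mem_image.mp (h1 hx)
        simp only [Finset.mem_Icc] at hk
        exact ⟨⟨k - 1, by omega⟩, by omega⟩
      · intro x hx
        have := h2 hx
        simp only [Finset.mem_Icc] at this
        omega
    · rintro ⟨h1, h2, h3⟩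
      have hs1 : ∀ x ∈ p.1, x ≤ n := by
        intro x hx
        calc x ≤ ∑ y ∈ p.1, y := Finset.single_le_sum (fun i _ => Nat.zero_le i) hx
          _ ≤ n := by omega
      have hs2 : ∀ x ∈ p.2, x ≤ n := by
        intro x hx
        calc x ≤ ∑ y ∈ p.2, y := Finset.single_le_sum (fun i _ => Nat.zero_le i) hx
          _ ≤ n := by omega
      refine ⟨⟨?_, ?_⟩, h3⟩
      · intro x hx
        obtain ⟨⟨m, hm⟩, hpos⟩ := h1 x hx
        refine Finset.mem_image.mpr ⟨m + 1, ?_, by omega⟩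
        simp only [Finset.mem_Icc]
        have := hs1 x hx
        omega
      · intro x hx
        simp only [Finset.mem_Icc]
        have := hs2 x hx
        have := h2 x hx
        omega
  -- cardinalities as filtered finset cards
  have hEven : Nat.card {p : Finset ℕ × Finset ℕ //
      ((∀ x ∈ p.1, Odd x ∧ 0 < x) ∧ (∀ x ∈ p.2, 0 < x) ∧
        (∑ x ∈ p.1, x) + (∑ x ∈ p.2, x) = n) ∧
      Even (p.1.card + p.2.card)}
      = (Fn.filter (fun p => Even (p.1.card + p.2.card))).card := by
    have e : ∀ p : Finset ℕ × Finset ℕ,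
        (((∀ x ∈ p.1, Odd x ∧ 0 < x) ∧ (∀ x ∈ p.2, 0 < x) ∧
          (∑ x ∈ p.1, x) + (∑ x ∈ p.2, x) = n) ∧ Even (p.1.card + p.2.card))
        ↔ p ∈ Fn.filter (fun p => Even (p.1.card + p.2.card)) := by
      intro p
      rw [Finset.mem_filter, hmem]
    rw [Nat.card_congr (Equiv.subtypeEquivRight e), Nat.card_eq_finsetCard]
  have hOdd : Nat.card {p : Finset ℕ × Finset ℕ //
      ((∀ x ∈ p.1, Odd x ∧ 0 < x) ∧ (∀ x ∈ p.2, 0 < x) ∧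
        (∑ x ∈ p.1, x) + (∑ x ∈ p.2, x) = n) ∧
      Odd (p.1.card + p.2.card)}
      = (Fn.filter (fun p => ¬ Even (p.1.card + p.2.card))).card := by
    have e : ∀ p : Finset ℕ × Finset ℕ,
        (((∀ x ∈ p.1, Odd x ∧ 0 < x) ∧ (∀ x ∈ p.2, 0 < x) ∧
          (∑ x ∈ p.1, x) + (∑ x ∈ p.2, x) = n) ∧ Odd (p.1.card + p.2.card))
        ↔ p ∈ Fn.filter (fun p => ¬ Even (p.1.card + p.2.card)) := by
      intro p
      rw [Finset.mem_filter, hmem, Nat.not_even_iff_odd]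
    rw [Nat.card_congr (Equiv.subtypeEquivRight e), Nat.card_eq_finsetCard]
  rw [hEven, hOdd]
  -- signed sum
  have hdiff : ((Fn.filter (fun p => Even (p.1.card + p.2.card))).card : ℤ)
      - ((Fn.filter (fun p => ¬ Even (p.1.card + p.2.card))).card : ℤ)
      = ∑ p ∈ Fn, (-1:ℤ) ^ (p.1.card + p.2.card) := by
    rw [← Finset.sum_filter_add_sum_filter_not Fn (fun p => Even (p.1.card + p.2.card))]
    have h1 : ∑ p ∈ Fn.filter (fun p => Even (p.1.card + p.2.card)),
        (-1:ℤ) ^ (p.1.card + p.2.card)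
        = ((Fn.filter (fun p => Even (p.1.card + p.2.card))).card : ℤ) := by
      rw [Finset.sum_congr rfl (fun p hp => (Finset.mem_filter.mp hp).2.neg_one_pow),
        Finset.sum_const, nsmul_eq_mul, mul_one]
    have h2 : ∑ p ∈ Fn.filter (fun p => ¬ Even (p.1.card + p.2.card)),
        (-1:ℤ) ^ (p.1.card + p.2.card)
        = -((Fn.filter (fun p => ¬ Even (p.1.card + p.2.card))).card : ℤ) := by
      rw [Finset.sum_congr rfl
          (fun p hp => (Nat.not_even_iff_odd.mp (Finset.mem_filter.mp hp).2).neg_one_pow),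
        Finset.sum_const, nsmul_eq_mul, mul_neg_one]
    rw [h1, h2]
    ring
  rw [hdiff]
  -- relate to polynomial coefficient
  have hcoeff := lhs_coeff n Od (Icc 1 (2*n))
  rw [← hFn] at hcoeff
  rw [← hcoeff]
  -- use the main identity
  have hsplit : (∏ m ∈ Od, (1 - X ^ m : Polynomial ℤ)) * (∏ k ∈ Icc 1 (2*n), (1 - X ^ k))
      = (∏ k ∈ Icc 1 n, (1 - X ^ (2*k-1) : Polynomial ℤ) ^ 2) * P2 1 n := by
    rw [odd_even_split n (fun k => 1 - X ^ k)]
    have himg : ∏ m ∈ Od, (1 - X ^ m : Polynomial ℤ)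
        = ∏ k ∈ Icc 1 n, (1 - X ^ (2*k-1)) := by
      rw [hOd]
      apply Finset.prod_image
      intro x hx y hy hxy
      simp only [Finset.mem_coe, Finset.mem_Icc] at hx hy hxy
      omega
    rw [himg, P2, Finset.prod_pow]
    ring
  rw [hsplit, main_identity n, rhs_coeff n hn]
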